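/- Let λ > 0, S(ξ) = √(2/λ)/cosh(ξ), and let β be a real number such that β ≠ p(p+1)·λ/2 for every odd positive integer p. If σ : ℝ → ℝ is a twice continuously differentiable even function, square-integrable on ℝ, satisfying σ''(ξ) − σ(ξ) + β·S(ξ)²·σ(ξ) = 0 for all ξ ∈ ℝ, then σ is identically zero. -/

import Mathlib

open Real Finset Filter MeasureTheory Topology

noncomputable def ptE (n : ℕ) (x : ℝ) : ℝ := Real.sinh x ^ n / Real.cosh x ^ (n + 1)

noncomputable def ptC (b s0 : ℝ) : ℕ → ℝ
  | 0 => s0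
  | 1 => 0
  | (n + 2) => (1 - b / (((n : ℝ) + 1) * ((n : ℝ) + 2))) * ptC b s0 n

lemma ptC_rec (b s0 : ℝ) (n : ℕ) :
    ((n:ℝ)+1) * ((n:ℝ)+2) * ptC b s0 (n+2) = (((n:ℝ)+1)*((n:ℝ)+2) - b) * ptC b s0 n := by
  have h1 : ((n:ℝ)+1) ≠ 0 := by positivity
  have h2 : ((n:ℝ)+2) ≠ 0 := by positivity
  show ((n:ℝ)+1) * ((n:ℝ)+2) * ((1 - b / (((n : ℝ) + 1) * ((n : ℝ) + 2))) * ptC b s0 n) = _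
  field_simp

lemma ptC_even_succ (b s0 : ℝ) (k : ℕ) :
    ptC b s0 (2*(k+1)) = (1 - b / ((2*(k:ℝ)+1) * (2*(k:ℝ)+2))) * ptC b s0 (2*k) := by
  have h : 2*(k+1) = (2*k)+2 := by omega
  rw [h]
  simp only [ptC]
  push_cast
  ring_nf

lemma ptE_hasDerivAt (n : ℕ) (x : ℝ) :
    HasDerivAt (ptE n) ((n:ℝ) * ptE (n-1) x - ((n:ℝ)+1) * ptE (n+1) x) x := by
  have hc := Real.cosh_pos x
  have h1 : HasDerivAt (fun y => Real.sinh y ^ n)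
      ((n:ℝ) * Real.sinh x ^ (n-1) * Real.cosh x) x := (Real.hasDerivAt_sinh x).pow n
  have h2 : HasDerivAt (fun y => Real.cosh y ^ (n+1))
      (((n:ℝ)+1) * Real.cosh x ^ n * Real.sinh x) x := by
    have := (Real.hasDerivAt_cosh x).fun_pow (n+1)
    simpa using this
  have h := h1.fun_div h2 (by positivity)
  refine HasDerivAt.congr_deriv h ?_; symm
  rcases n with _ | m
  · simp only [ptE, Nat.zero_sub, Nat.cast_zero, pow_zero]
    field_simp
    ring
  · have hm : m + 1 - 1 = m := rfl
    simp only [ptE, hm]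
    field_simp
    ring

lemma ptE_rel (n : ℕ) (x : ℝ) : (1 / Real.cosh x ^ 2) * ptE n x = ptE n x - ptE (n+2) x := by
  have hc : Real.cosh x ≠ 0 := ne_of_gt (Real.cosh_pos x)
  have key : Real.cosh x ^ 2 - Real.sinh x ^2 = 1 := Real.cosh_sq_sub_sinh_sq x
  have h : ptE (n+2) x = ptE n x * (Real.sinh x ^ 2 / Real.cosh x ^ 2) := by
    simp only [ptE]
    rw [show n+2+1 = (n+1)+2 by omega, pow_add, pow_add]
    rw [div_mul_div_comm]
  rw [h]
  set E := ptE n x with hE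
  field_simp
  linear_combination (-E) * key

lemma ptE_le {n : ℕ} {x T : ℝ} (hx : 0 ≤ x) (hxT : x ≤ T) :
    ptE n x ≤ (Real.sinh T / Real.cosh T) ^ n := by
  have hsx : 0 ≤ Real.sinh x := Real.sinh_nonneg_iff.2 hx
  have hcx := Real.cosh_pos x
  have hcT := Real.cosh_pos T
  have hmono : Real.sinh x / Real.cosh x ≤ Real.sinh T / Real.cosh T := by
    rw [div_le_div_iff₀ hcx hcT]
    have h : 0 ≤ Real.sinh (T - x) := Real.sinh_nonneg_iff.2 (by linarith)
    rw [Real.sinh_sub] at h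
    linarith
  have hrw : ptE n x = (Real.sinh x / Real.cosh x) ^ n * (1 / Real.cosh x) := by
    simp [ptE, div_pow, pow_succ]
    ring
  rw [hrw]
  calc (Real.sinh x / Real.cosh x) ^ n * (1 / Real.cosh x)
      ≤ (Real.sinh x / Real.cosh x) ^ n * 1 := by
        apply mul_le_mul_of_nonneg_left _ (by positivity)
        rw [div_le_one hcx]; exact Real.one_le_cosh x
    _ = (Real.sinh x / Real.cosh x) ^ n := mul_one _
    _ ≤ (Real.sinh T / Real.cosh T) ^ n := pow_le_pow_left₀ (by positivity) hmono n

lemma ptE_nonneg (n : ℕ) {x : ℝ} (hx : 0 ≤ x) : 0 ≤ ptE n x := by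
  have hsx : 0 ≤ Real.sinh x := Real.sinh_nonneg_iff.2 hx
  have hcx := Real.cosh_pos x
  exact div_nonneg (by positivity) (by positivity)

lemma pt_tanh_lt_one (T : ℝ) : Real.sinh T / Real.cosh T < 1 := by
  have hcT := Real.cosh_pos T
  rw [div_lt_one hcT]
  nlinarith [Real.cosh_sub_sinh T, Real.exp_pos (-T)]

lemma ptE_zero_eval : ∀ n, ptE n 0 = if n = 0 then 1 else 0 := by
  intro n
  rcases n with _ | m <;> simp [ptE]

noncomputable def ptP (b s0 : ℝ) (M : ℕ) (x : ℝ) : ℝ :=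
  ∑ k ∈ Finset.range (M+1), ptC b s0 (2*k) * ptE (2*k) x

noncomputable def ptD1 (b s0 : ℝ) (M : ℕ) (x : ℝ) : ℝ :=
  ∑ k ∈ Finset.range (M+1), ptC b s0 (2*k) *
    ((2*(k:ℝ)) * ptE (2*k-1) x - (2*(k:ℝ)+1) * ptE (2*k+1) x)

noncomputable def ptD2 (b s0 : ℝ) (M : ℕ) (x : ℝ) : ℝ :=
  ∑ k ∈ Finset.range (M+1), ptC b s0 (2*k) *
    ((2*(k:ℝ)) * ((2*(k:ℝ)-1) * ptE (2*k-2) x - (2*(k:ℝ)) * ptE (2*k) x)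
      - (2*(k:ℝ)+1) * ((2*(k:ℝ)+1) * ptE (2*k) x - (2*(k:ℝ)+2) * ptE (2*k+2) x))

lemma ptP_hasDerivAt (b s0 : ℝ) (M : ℕ) (x : ℝ) :
    HasDerivAt (fun y => ptP b s0 M y) (ptD1 b s0 M x) x := by
  unfold ptP ptD1
  apply HasDerivAt.fun_sum
  intro k hk
  have h := (ptE_hasDerivAt (2*k) x).const_mul (ptC b s0 (2*k))
  refine HasDerivAt.congr_deriv h ?_; symm
  push_cast
  ring

lemma ptD1_hasDerivAt (b s0 : ℝ) (M : ℕ) (x : ℝ) :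
    HasDerivAt (fun y => ptD1 b s0 M y) (ptD2 b s0 M x) x := by
  unfold ptD1 ptD2
  apply HasDerivAt.fun_sum
  intro k hk
  have h1 := (ptE_hasDerivAt (2*k-1) x).const_mul (2*(k:ℝ))
  have h2 := (ptE_hasDerivAt (2*k+1) x).const_mul (2*(k:ℝ)+1)
  have h := (h1.sub h2).const_mul (ptC b s0 (2*k))
  refine HasDerivAt.congr_deriv h ?_; symm
  rcases k with _ | j
  · norm_num
  · have e1 : 2*(j+1)-1 = 2*j+1 := by omega
    have e2 : 2*(j+1)-2 = 2*j := by omega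
    have e3 : 2*j+1-1 = 2*j := by omega
    have e4 : 2*j+1+1 = 2*(j+1) := by omega
    rw [e1, e2, e3, e4]
    push_cast
    ring

lemma ptD2_eq (b s0 : ℝ) (M : ℕ) (x : ℝ) :
    ptD2 b s0 M x = (1 - b * (1 / Real.cosh x ^ 2)) * ptP b s0 M x
      + (2*(M:ℝ)+1) * (2*(M:ℝ)+2) * ptC b s0 (2*M+2) * (ptE (2*M+2) x - ptE (2*M) x) := by
  induction M with
  | zero =>
    simp only [ptD2, ptP, Finset.sum_range_one]
    have h1 := ptE_rel 0 x
    have h2 := ptC_rec b s0 0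
    norm_num at h1 h2 ⊢
    linear_combination (b * ptC b s0 0) * h1 + (ptE 0 x - ptE 2 x) * h2
  | succ M ih =>
    have hs : ptD2 b s0 (M+1) x = ptD2 b s0 M x + ptC b s0 (2*(M+1)) *
        ((2*((M:ℝ)+1)) * ((2*((M:ℝ)+1)-1) * ptE (2*(M+1)-2) x - (2*((M:ℝ)+1)) * ptE (2*(M+1)) x)
          - (2*((M:ℝ)+1)+1) * ((2*((M:ℝ)+1)+1) * ptE (2*(M+1)) x - (2*((M:ℝ)+1)+2) * ptE (2*(M+1)+2) x)) := by
      simp only [ptD2, Finset.sum_range_succ]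
      push_cast
      ring
    have hp : ptP b s0 (M+1) x = ptP b s0 M x + ptC b s0 (2*(M+1)) * ptE (2*(M+1)) x := by
      simp only [ptP, Finset.sum_range_succ]
    rw [hs, hp, ih]
    have e2 : 2*(M+1)-2 = 2*M := by omega
    have e3 : 2*(M+1)+2 = 2*M+4 := by omega
    have e4 : 2*(M+1) = 2*M+2 := by omega
    rw [e2, e3, e4]
    have hrel := ptE_rel (2*M+2) x
    have hrec := ptC_rec b s0 (2*M+2)
    rw [show 2*M+2+2 = 2*M+4 by omega] at hrel hrec
    push_cast at hrec ⊢
    linear_combination (b * ptC b s0 (2*M+2)) * hrel + (ptE (2*M+2) x - ptE (2*M+4) x) * hrec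

lemma one_div_tele (k : ℕ) :
    1 / ((2*(k:ℝ)+1) * (2*(k:ℝ)+2)) ≤ 1/(2*(k:ℝ)+1) - 1/(2*(k:ℝ)+3) := by
  have h1 : (0:ℝ) < 2*(k:ℝ)+1 := by positivity
  have h3 : (0:ℝ) < 2*(k:ℝ)+3 := by positivity
  rw [div_sub_div _ _ (ne_of_gt h1) (ne_of_gt h3), div_le_div_iff₀ (by positivity) (by positivity)]
  ring_nf
  nlinarith [sq_nonneg (k:ℝ)]

lemma ptC_abs_le (b s0 : ℝ) : ∀ k : ℕ, |ptC b s0 (2*k)| ≤ |s0| * Real.exp (|b| * (1 - 1/(2*(k:ℝ)+1))) := by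
  intro k
  induction k with
  | zero => simp [ptC]
  | succ k ih =>
    have hd : (0:ℝ) < (2*(k:ℝ)+1) * (2*(k:ℝ)+2) := by positivity
    rw [ptC_even_succ, abs_mul]
    have h1 : |1 - b / ((2*(k:ℝ)+1) * (2*(k:ℝ)+2))| ≤ Real.exp (|b| / ((2*(k:ℝ)+1) * (2*(k:ℝ)+2))) := by
      have habs : |b / ((2*(k:ℝ)+1) * (2*(k:ℝ)+2))| = |b| / ((2*(k:ℝ)+1) * (2*(k:ℝ)+2)) := by
        rw [abs_div, abs_of_pos hd]
      have htri : |1 - b / ((2*(k:ℝ)+1) * (2*(k:ℝ)+2))| ≤ |(1:ℝ)| + |b / ((2*(k:ℝ)+1) * (2*(k:ℝ)+2))| :=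
        abs_sub _ _
      have hexp := Real.add_one_le_exp (|b| / ((2*(k:ℝ)+1) * (2*(k:ℝ)+2)))
      rw [habs, abs_one] at htri
      linarith
    calc |1 - b / ((2*(k:ℝ)+1) * (2*(k:ℝ)+2))| * |ptC b s0 (2*k)|
        ≤ Real.exp (|b| / ((2*(k:ℝ)+1) * (2*(k:ℝ)+2))) * (|s0| * Real.exp (|b| * (1 - 1/(2*(k:ℝ)+1)))) :=
          mul_le_mul h1 ih (abs_nonneg _) (le_of_lt (Real.exp_pos _))
      _ = |s0| * Real.exp (|b| / ((2*(k:ℝ)+1) * (2*(k:ℝ)+2)) + |b| * (1 - 1/(2*(k:ℝ)+1))) := by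
          rw [Real.exp_add]; ring
      _ ≤ |s0| * Real.exp (|b| * (1 - 1/(2*((k:ℕ):ℝ)+2+1))) := by
          apply mul_le_mul_of_nonneg_left _ (abs_nonneg _)
          apply Real.exp_le_exp.2
          have key : |b| / ((2*(k:ℝ)+1) * (2*(k:ℝ)+2)) ≤ |b| * (1/(2*(k:ℝ)+1) - 1/(2*(k:ℝ)+3)) := by
            rw [div_eq_mul_inv, ← one_div]
            have := one_div_tele k
            nlinarith [abs_nonneg b, this]
          ring_nf at key ⊢
          linarith [key]
      _ = |s0| * Real.exp (|b| * (1 - 1/(2*((k+1:ℕ):ℝ)+1))) := by push_cast; ring_nf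

lemma ptC_abs_le' (b s0 : ℝ) (k : ℕ) : |ptC b s0 (2*k)| ≤ |s0| * Real.exp |b| := by
  refine le_trans (ptC_abs_le b s0 k) ?_
  apply mul_le_mul_of_nonneg_left _ (abs_nonneg _)
  apply Real.exp_le_exp.2
  have hp : (0:ℝ) < 2*(k:ℝ)+1 := by positivity
  have h2 : 0 ≤ 1/(2*(k:ℝ)+1) := by positivity
  nlinarith [abs_nonneg b]

lemma ptC_ne (b s0 : ℝ) (hb : ∀ k : ℕ, b ≠ (2*(k:ℝ)+1)*(2*(k:ℝ)+2)) (hs : s0 ≠ 0) :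
    ∀ k, ptC b s0 (2*k) ≠ 0 := by
  intro k
  induction k with
  | zero => exact hs
  | succ k ih =>
    rw [ptC_even_succ]
    apply mul_ne_zero _ ih
    intro hz
    apply hb k
    have hd : ((2*(k:ℝ)+1) * (2*(k:ℝ)+2)) ≠ 0 := by positivity
    field_simp at hz
    linarith [hz]

lemma pt_exp_neg_le {t : ℝ} (h0 : 0 ≤ t) (h2 : t ≤ 1/2) : Real.exp (-(2*t)) ≤ 1 - t := by
  have h := Real.add_one_le_exp (2*t)
  have hpos : (0:ℝ) < Real.exp (2*t) := Real.exp_pos _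
  rw [Real.exp_neg]
  have hmul := mul_inv_cancel₀ (ne_of_gt hpos)
  have ht : 0 ≤ t * (1 - 2*t) := mul_nonneg h0 (by linarith)
  nlinarith [mul_le_mul_of_nonneg_left h (by linarith : (0:ℝ) ≤ 1 - t), inv_pos.2 hpos]

lemma ptC_lower (b s0 : ℝ) (K0 : ℕ) (hK0 : |b| ≤ (K0:ℝ)) (s : ℝ)
    (hs : s * ptC b s0 (2*K0) = (abs (ptC b s0 (2*K0)))) :
    ∀ k, K0 ≤ k → (abs (ptC b s0 (2*K0))) * Real.exp (2 * |b| * (1/(2*(k:ℝ)+1) - 1)) ≤ s * ptC b s0 (2*k) := by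
  intro k hk
  induction k, hk using Nat.le_induction with
  | base =>
      rw [hs]
      have h1 : Real.exp (2 * |b| * (1/(2*(K0:ℝ)+1) - 1)) ≤ 1 := by
        rw [Real.exp_le_one_iff]
        have hp : (0:ℝ) < 2*(K0:ℝ)+1 := by positivity
        have h2 : 1/(2*(K0:ℝ)+1) ≤ 1 := by rw [div_le_one hp]; linarith
        nlinarith [abs_nonneg b]
      exact mul_le_of_le_one_right (abs_nonneg _) h1
  | succ k hkK ih =>
      have hd : (0:ℝ) < (2*(k:ℝ)+1) * (2*(k:ℝ)+2) := by positivity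
      have hkb : |b| ≤ (k:ℝ) := le_trans hK0 (by exact_mod_cast Nat.cast_le.2 hkK)
      have ht2 : |b| / ((2*(k:ℝ)+1) * (2*(k:ℝ)+2)) ≤ 1/2 := by
        rw [div_le_iff₀ hd]
        nlinarith [abs_nonneg b]
      have hfac : Real.exp (-(2*(|b| / ((2*(k:ℝ)+1) * (2*(k:ℝ)+2))))) ≤ 1 - b / ((2*(k:ℝ)+1) * (2*(k:ℝ)+2)) := by
        have h1 := pt_exp_neg_le (by positivity) ht2
        have h2 : b / ((2*(k:ℝ)+1) * (2*(k:ℝ)+2)) ≤ |b| / ((2*(k:ℝ)+1) * (2*(k:ℝ)+2)) := by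
          gcongr
          · exact le_abs_self b
        linarith
      rw [ptC_even_succ]
      have hfpos : (0:ℝ) < 1 - b / ((2*(k:ℝ)+1) * (2*(k:ℝ)+2)) :=
        lt_of_lt_of_le (Real.exp_pos _) hfac
      have hA : (0:ℝ) ≤ (abs (ptC b s0 (2*K0))) * Real.exp (2 * |b| * (1/(2*(k:ℝ)+1) - 1)) := by positivity
      have step : (abs (ptC b s0 (2*K0))) * Real.exp (2 * |b| * (1/(2*(k:ℝ)+1) - 1)) * Real.exp (-(2*(|b| / ((2*(k:ℝ)+1) * (2*(k:ℝ)+2)))))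
          ≤ s * ((1 - b / ((2*(k:ℝ)+1) * (2*(k:ℝ)+2))) * ptC b s0 (2*k)) := by
        calc (abs (ptC b s0 (2*K0))) * Real.exp (2 * |b| * (1/(2*(k:ℝ)+1) - 1)) * Real.exp (-(2*(|b| / ((2*(k:ℝ)+1) * (2*(k:ℝ)+2)))))
            ≤ (s * ptC b s0 (2*k)) * (1 - b / ((2*(k:ℝ)+1) * (2*(k:ℝ)+2))) := by
              apply mul_le_mul ih hfac (le_of_lt (Real.exp_pos _)) ?_
              nlinarith [ih, hA, Real.exp_pos (2 * |b| * (1/(2*(k:ℝ)+1) - 1)), abs_nonneg (ptC b s0 (2*K0))]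
          _ = s * ((1 - b / ((2*(k:ℝ)+1) * (2*(k:ℝ)+2))) * ptC b s0 (2*k)) := by ring
      refine le_trans ?_ step
      rw [mul_assoc (abs (ptC b s0 (2*K0))) (Real.exp (2 * |b| * (1/(2*(k:ℝ)+1) - 1))) (Real.exp (-(2*(|b| / ((2*(k:ℝ)+1) * (2*(k:ℝ)+2)))))), ← Real.exp_add]
      apply mul_le_mul_of_nonneg_left _ (abs_nonneg _)
      apply Real.exp_le_exp.2
      have key : 2 * (|b| / ((2*(k:ℝ)+1) * (2*(k:ℝ)+2))) ≤ 2 * |b| * (1/(2*(k:ℝ)+1) - 1/(2*(k:ℝ)+3)) := by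
        have h1d := one_div_tele k
        have h2 := mul_le_mul_of_nonneg_left h1d (by positivity : (0:ℝ) ≤ 2 * |b|)
        calc 2 * (|b| / ((2*(k:ℝ)+1) * (2*(k:ℝ)+2))) = 2 * |b| * (1 / ((2*(k:ℝ)+1) * (2*(k:ℝ)+2))) := by ring
          _ ≤ 2 * |b| * (1/(2*(k:ℝ)+1) - 1/(2*(k:ℝ)+3)) := h2
      push_cast
      ring_nf
      ring_nf at key
      linarith [key]

noncomputable def ptV (b : ℝ) (t : ℝ) (p : ℝ × ℝ) : ℝ × ℝ :=
  (p.2, (1 - b * (1 / Real.cosh t ^ 2)) * p.1)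

lemma ptV_lip (b : ℝ) (t : ℝ) : LipschitzWith (Real.toNNReal (1 + |b|)) (ptV b t) := by
  apply LipschitzWith.of_dist_le_mul
  intro p q
  have hc : (1:ℝ) ≤ Real.cosh t := Real.one_le_cosh t
  have hW0 : (0:ℝ) ≤ 1 / Real.cosh t ^ 2 := by positivity
  have hW1 : 1 / Real.cosh t ^ 2 ≤ 1 := by
    rw [div_le_one (by positivity)]
    nlinarith
  have hcoe : (Real.toNNReal (1 + |b|) : ℝ) = 1 + |b| :=
    Real.coe_toNNReal _ (by positivity)
  rw [hcoe, Prod.dist_eq, Prod.dist_eq]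
  simp only [ptV, Real.dist_eq]
  have hq : |1 - b * (1 / Real.cosh t ^ 2)| ≤ 1 + |b| := by
    have h1 : |1 - b * (1 / Real.cosh t ^ 2)| ≤ |(1:ℝ)| + |b * (1 / Real.cosh t ^ 2)| := abs_sub _ _
    rw [abs_one, abs_mul, abs_of_nonneg hW0] at h1
    nlinarith [abs_nonneg b]
  have hmax1 : |p.1 - q.1| ≤ max (|p.1 - q.1|) (|p.2 - q.2|) := le_max_left _ _
  have hmax2 : |p.2 - q.2| ≤ max (|p.1 - q.1|) (|p.2 - q.2|) := le_max_right _ _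
  have hmaxnn : 0 ≤ max (|p.1 - q.1|) (|p.2 - q.2|) := le_trans (abs_nonneg _) hmax1
  apply max_le
  · nlinarith [abs_nonneg b]
  · have : |(1 - b * (1 / Real.cosh t ^ 2)) * p.1 - (1 - b * (1 / Real.cosh t ^ 2)) * q.1|
        = |1 - b * (1 / Real.cosh t ^ 2)| * |p.1 - q.1| := by
      rw [← abs_mul]; ring_nf
    rw [this]
    nlinarith [abs_nonneg (p.1 - q.1), abs_nonneg (1 - b * (1 / Real.cosh t ^ 2))]

lemma ptP_zero (b s0 : ℝ) (M : ℕ) : ptP b s0 M 0 = s0 := by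
  unfold ptP
  rw [Finset.sum_eq_single 0]
  · simp [ptE_zero_eval, ptC]
  · intro k hk hne
    rw [ptE_zero_eval]
    simp [Nat.mul_ne_zero, hne]
  · intro h
    simp at h

lemma ptD1_zero (b s0 : ℝ) (M : ℕ) : ptD1 b s0 M 0 = 0 := by
  unfold ptD1
  apply Finset.sum_eq_zero
  intro k hk
  rcases k with _ | j
  · simp only [ptE]
    norm_num
  · rw [ptE_zero_eval, ptE_zero_eval]
    have h1 : 2*(j+1)-1 ≠ 0 := by omega
    have h2 : 2*(j+1)+1 ≠ 0 := by omega
    simp [h1, h2]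

lemma pt_approx (b s0 : ℝ) (σ : ℝ → ℝ)
    (hσ1 : ∀ x, HasDerivAt σ (deriv σ x) x)
    (hσ2 : ∀ x, HasDerivAt (deriv σ) ((1 - b * (1 / Real.cosh x ^ 2)) * σ x) x)
    (hcont : Continuous σ) (hcont' : Continuous (deriv σ))
    (hs0 : σ 0 = s0) (hs0' : deriv σ 0 = 0) (T : ℝ) (hT : 0 ≤ T) (M : ℕ) :
    |σ T - ptP b s0 M T| ≤ gronwallBound 0 (Real.toNNReal (1 + |b|))
      (2 * ((2*(M:ℝ)+1) * (2*(M:ℝ)+2)) * (|s0| * Real.exp |b|) * (Real.sinh T / Real.cosh T)^(2*M)) T := by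
  set Q := Real.sinh T / Real.cosh T with hQdef
  have hQ0 : 0 ≤ Q := by
    have := Real.sinh_nonneg_iff.2 hT
    have := Real.cosh_pos T
    positivity
  have hQ1 : Q < 1 := pt_tanh_lt_one T
  set C0 : ℝ := |s0| * Real.exp |b| with hC0def
  have hC0 : 0 ≤ C0 := by positivity
  set εg : ℝ := 2 * ((2*(M:ℝ)+1) * (2*(M:ℝ)+2)) * C0 * Q^(2*M) with hεdef
  set f : ℝ → ℝ × ℝ := fun t => (σ t, deriv σ t) with hfdef
  set g : ℝ → ℝ × ℝ := fun t => (ptP b s0 M t, ptD1 b s0 M t) with hgdef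
  have key := dist_le_of_approx_trajectories_ODE (v := ptV b)
    (K := Real.toNNReal (1 + |b|)) (f := f) (g := g)
    (f' := fun t => (deriv σ t, (1 - b * (1 / Real.cosh t ^ 2)) * σ t))
    (g' := fun t => (ptD1 b s0 M t, ptD2 b s0 M t))
    (a := 0) (b := T) (εf := 0) (εg := εg) (δ := 0)
    (ptV_lip b)
    (by -- ContinuousOn f
      exact (hcont.prodMk hcont').continuousOn)
    (by -- HasDerivWithinAt f
      intro t ht
      exact ((hσ1 t).prodMk (hσ2 t)).hasDerivWithinAt)
    (by -- f_bound
      intro t ht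
      have : ptV b t (f t) = (deriv σ t, (1 - b * (1 / Real.cosh t ^ 2)) * σ t) := rfl
      rw [this, dist_self]
    )
    (by -- ContinuousOn g
      have hgc : Continuous g := by
        apply Continuous.prodMk
        · exact continuous_iff_continuousAt.2 fun x => (ptP_hasDerivAt b s0 M x).continuousAt
        · exact continuous_iff_continuousAt.2 fun x => (ptD1_hasDerivAt b s0 M x).continuousAt
      exact hgc.continuousOn)
    (by -- HasDerivWithinAt g
      intro t ht
      exact ((ptP_hasDerivAt b s0 M t).prodMk (ptD1_hasDerivAt b s0 M t)).hasDerivWithinAt)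
    (by -- g_bound
      intro t ht
      have ht0 : 0 ≤ t := ht.1
      have htT : t ≤ T := le_of_lt ht.2
      have hvg : ptV b t (g t) = (ptD1 b s0 M t, (1 - b * (1 / Real.cosh t ^ 2)) * ptP b s0 M t) := rfl
      rw [hvg, Prod.dist_eq]
      simp only [Real.dist_eq]
      rw [sub_self, abs_zero]
      apply max_le (by
        apply mul_nonneg (mul_nonneg (mul_nonneg (by norm_num) (by positivity)) hC0)
        positivity)
      rw [ptD2_eq]
      have habs : |(1 - b * (1 / Real.cosh t ^ 2)) * ptP b s0 M t
          + (2*(M:ℝ)+1) * (2*(M:ℝ)+2) * ptC b s0 (2*M+2) * (ptE (2*M+2) t - ptE (2*M) t)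
          - (1 - b * (1 / Real.cosh t ^ 2)) * ptP b s0 M t|
          = |(2*(M:ℝ)+1) * (2*(M:ℝ)+2) * ptC b s0 (2*M+2) * (ptE (2*M+2) t - ptE (2*M) t)| := by
        ring_nf
      rw [habs]
      have hcle : |ptC b s0 (2*M+2)| ≤ C0 := by
        have := ptC_abs_le' b s0 (M+1)
        rw [show 2*(M+1) = 2*M+2 by omega] at this
        exact this
      have hE1 : ptE (2*M+2) t ≤ Q^(2*M) := by
        calc ptE (2*M+2) t ≤ Q^(2*M+2) := ptE_le ht0 htT
          _ ≤ Q^(2*M) := pow_le_pow_of_le_one hQ0 (le_of_lt hQ1) (by omega)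
      have hE2 : ptE (2*M) t ≤ Q^(2*M) := ptE_le ht0 htT
      have hEn1 := ptE_nonneg (2*M+2) ht0
      have hEn2 := ptE_nonneg (2*M) ht0
      have hdiff : |ptE (2*M+2) t - ptE (2*M) t| ≤ 2 * Q^(2*M) := by
        rw [abs_le]
        constructor <;> nlinarith
      rw [abs_mul]
      have hcoef : |(2*(M:ℝ)+1) * (2*(M:ℝ)+2) * ptC b s0 (2*M+2)| ≤ ((2*(M:ℝ)+1) * (2*(M:ℝ)+2)) * C0 := by
        rw [abs_mul]
        have h1 : |(2*(M:ℝ)+1) * (2*(M:ℝ)+2)| = (2*(M:ℝ)+1) * (2*(M:ℝ)+2) := abs_of_pos (by positivity)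
        rw [h1]
        exact mul_le_mul_of_nonneg_left hcle (by positivity)
      calc |(2*(M:ℝ)+1) * (2*(M:ℝ)+2) * ptC b s0 (2*M+2)| * |ptE (2*M+2) t - ptE (2*M) t|
          ≤ ((2*(M:ℝ)+1) * (2*(M:ℝ)+2)) * C0 * (2 * Q^(2*M)) := by
            apply mul_le_mul hcoef hdiff (abs_nonneg _) (by positivity)
        _ = εg := by rw [hεdef]; ring)
    (by -- initial
      have : f 0 = g 0 := by
        rw [hfdef, hgdef]
        simp only [hs0, hs0', ptP_zero, ptD1_zero]
      rw [this, dist_self])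
    T ⟨hT, le_refl T⟩
  rw [zero_add, sub_zero] at key
  calc |σ T - ptP b s0 M T| ≤ dist (f T) (g T) := by
        rw [Prod.dist_eq, Real.dist_eq]
        exact le_max_left _ _
    _ ≤ _ := key

lemma pt_unique (b : ℝ) (σ : ℝ → ℝ)
    (hσ1 : ∀ x, HasDerivAt σ (deriv σ x) x)
    (hσ2 : ∀ x, HasDerivAt (deriv σ) ((1 - b * (1 / Real.cosh x ^ 2)) * σ x) x)
    (hcont : Continuous σ) (hcont' : Continuous (deriv σ))
    (hz : σ 0 = 0) (hz' : deriv σ 0 = 0) (T : ℝ) (hT : 0 ≤ T) : σ T = 0 := by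
  set f : ℝ → ℝ × ℝ := fun t => (σ t, deriv σ t) with hfdef
  have key := dist_le_of_trajectories_ODE (v := ptV b)
    (K := Real.toNNReal (1 + |b|)) (f := f) (g := fun _ => ((0:ℝ), (0:ℝ)))
    (a := 0) (b := T) (δ := 0)
    (ptV_lip b)
    ((hcont.prodMk hcont').continuousOn)
    (by
      intro t ht
      exact ((hσ1 t).prodMk (hσ2 t)).hasDerivWithinAt)
    (continuousOn_const)
    (by
      intro t ht
      have hv : ptV b t ((0:ℝ), (0:ℝ)) = ((0:ℝ), (0:ℝ)) := by
        simp [ptV]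
      rw [hv]
      exact (hasDerivAt_const t ((0:ℝ),(0:ℝ))).hasDerivWithinAt)
    (by
      have : f 0 = ((0:ℝ), (0:ℝ)) := by rw [hfdef]; simp [hz, hz']
      rw [this, dist_self])
    T ⟨hT, le_refl T⟩
  rw [zero_mul] at key
  have h1 : |σ T - 0| ≤ dist (f T) ((0:ℝ),(0:ℝ)) := by
    rw [Prod.dist_eq, Real.dist_eq]
    exact le_max_left _ _
  rw [sub_zero] at h1
  have := le_trans h1 key
  exact abs_eq_zero.1 (le_antisymm this (abs_nonneg _))


/-- Let `λ > 0`, `S(ξ) = √(2/λ)/cosh ξ`, and let `β ∈ ℝ` satisfy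
`β ≠ p(p+1)λ/2` for every odd positive integer `p`. If `σ` is a `C²` even square-integrable
function with `σ'' − σ + β·S²·σ = 0` on `ℝ`, then `σ ≡ 0`. -/
theorem poschl_teller_no_even_L2_solution (lam : ℝ) (hlam : 0 < lam) (S : ℝ → ℝ)
    (hS : ∀ ξ, S ξ = Real.sqrt (2 / lam) / Real.cosh ξ)
    (β : ℝ) (hβ : ∀ p : ℕ, Odd p → 0 < p → β ≠ (p : ℝ) * ((p : ℝ) + 1) * lam / 2)
    (σ : ℝ → ℝ)
    (hreg : ContDiff ℝ 2 σ)
    (heven : ∀ ξ, σ (-ξ) = σ ξ)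
    (hL2 : MeasureTheory.MemLp σ 2 MeasureTheory.volume)
    (hode : ∀ ξ, deriv (deriv σ) ξ - σ ξ + β * S ξ ^ 2 * σ ξ = 0) :
    ∀ ξ, σ ξ = 0 := by
  set b : ℝ := 2 * β / lam with hbdef
  have hlam' : lam ≠ 0 := ne_of_gt hlam
  have hb : ∀ k : ℕ, b ≠ (2*(k:ℝ)+1)*(2*(k:ℝ)+2) := by
    intro k hcontra
    refine hβ (2*k+1) ⟨k, by omega⟩ (by omega) ?_
    push_cast
    rw [hbdef] at hcontra
    field_simp at hcontra
    linarith [hcontra]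
  have hode' : ∀ x, deriv (deriv σ) x = (1 - b * (1 / Real.cosh x ^ 2)) * σ x := by
    intro x
    have h := hode x
    have hS2 : S x ^ 2 = (2/lam) * (1 / Real.cosh x ^2) := by
      rw [hS]
      rw [div_pow, Real.sq_sqrt (by positivity : (0:ℝ) ≤ 2/lam)]
      ring
    rw [hS2] at h
    have hβb : β * ((2/lam) * (1 / Real.cosh x ^2)) = b * (1/Real.cosh x^2) := by
      rw [hbdef]; field_simp
    rw [hβb] at h
    linarith [h]
  have hdiff : Differentiable ℝ σ := hreg.differentiable (by norm_num)
  have hσ1 : ∀ x, HasDerivAt σ (deriv σ x) x := fun x => (hdiff x).hasDerivAt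
  have hc2 : ContDiff ℝ 1 (deriv σ) :=
    ((contDiff_succ_iff_deriv (n := 1)).1 (by exact_mod_cast hreg)).2.2
  have hdiff' : Differentiable ℝ (deriv σ) := hc2.differentiable (by norm_num)
  have hσ2 : ∀ x, HasDerivAt (deriv σ) ((1 - b * (1 / Real.cosh x ^ 2)) * σ x) x := by
    intro x; rw [← hode' x]; exact (hdiff' x).hasDerivAt
  have hcont : Continuous σ := hreg.continuous
  have hcont' : Continuous (deriv σ) := hdiff'.continuous
  have hσ'0 : deriv σ 0 = 0 := by
    have hg : HasDerivAt σ (deriv σ 0) (-0 : ℝ) := by rw [neg_zero]; exact (hσ1 0)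
    have h := hg.comp 0 (hasDerivAt_neg (0:ℝ))
    have hfun : (σ ∘ fun x : ℝ => -x) = σ := funext fun x => heven x
    rw [hfun] at h
    have := h.unique (hσ1 0)
    linarith
  by_cases hz : σ 0 = 0
  · intro ξ
    have hpos : ∀ t, 0 ≤ t → σ t = 0 := fun t ht =>
      pt_unique b σ hσ1 hσ2 hcont hcont' hz hσ'0 t ht
    rcases le_or_gt 0 ξ with h | h
    · exact hpos ξ h
    · rw [← heven ξ]
      exact hpos (-ξ) (by linarith)
  · exfalso
    set s0 : ℝ := σ 0 with hs0def
    set C0 : ℝ := |s0| * Real.exp |b| with hC0def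
    -- Convergence of the partial sums to σ
    have hlim : ∀ t, 0 ≤ t → Tendsto (fun M => ptP b s0 M t) atTop (𝓝 (σ t)) := by
      intro t ht
      rw [tendsto_iff_dist_tendsto_zero]
      have hQ0 : 0 ≤ Real.sinh t / Real.cosh t :=
        div_nonneg (Real.sinh_nonneg_iff.2 ht) (Real.cosh_pos t).le
      have hQ1 : Real.sinh t / Real.cosh t < 1 := pt_tanh_lt_one t
      have hr0 : 0 ≤ (Real.sinh t / Real.cosh t)^2 := sq_nonneg _
      have hr1 : (Real.sinh t / Real.cosh t)^2 < 1 := by nlinarith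
      have t2 := tendsto_pow_const_mul_const_pow_of_lt_one 2 hr0 hr1
      have t1 := tendsto_pow_const_mul_const_pow_of_lt_one 1 hr0 hr1
      have t0 := tendsto_pow_const_mul_const_pow_of_lt_one 0 hr0 hr1
      have hsum := ((t2.const_mul (8*C0)).add ((t1.const_mul (12*C0)).add (t0.const_mul (4*C0))))
      rw [mul_zero, mul_zero, mul_zero, add_zero, add_zero] at hsum
      have hε : Tendsto (fun M : ℕ =>
          2 * ((2*(M:ℝ)+1) * (2*(M:ℝ)+2)) * C0 * (Real.sinh t / Real.cosh t)^(2*M)) atTop (𝓝 0) := by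
        apply hsum.congr
        intro M
        rw [pow_mul]
        push_cast
        ring
      have hG : Tendsto (fun M : ℕ => gronwallBound 0 (Real.toNNReal (1+|b|))
          (2 * ((2*(M:ℝ)+1) * (2*(M:ℝ)+2)) * C0 * (Real.sinh t / Real.cosh t)^(2*M)) t) atTop (𝓝 0) := by
        have hcontG := (gronwallBound_continuous_ε 0 (Real.toNNReal (1+|b|)) t).tendsto 0
        have hcomp := hcontG.comp hε
        rw [gronwallBound_ε0, zero_mul] at hcomp
        exact hcomp
      apply squeeze_zero (fun M => dist_nonneg) _ hG
      intro M
      rw [dist_comm, Real.dist_eq]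
      exact pt_approx b s0 σ hσ1 hσ2 hcont hcont' rfl hσ'0 t ht M
    -- Lower bound apparatus
    obtain ⟨K0, hK0⟩ := exists_nat_ge |b|
    have hcne := ptC_ne b s0 hb hz
    set s : ℝ := if 0 ≤ ptC b s0 (2*K0) then 1 else -1 with hsdef
    have hs : s * ptC b s0 (2*K0) = |ptC b s0 (2*K0)| := by
      rcases le_or_gt 0 (ptC b s0 (2*K0)) with h | h
      · rw [hsdef, if_pos h, one_mul, abs_of_nonneg h]
      · rw [hsdef, if_neg (not_le.2 h), abs_of_neg h]; ring
    have hsabs : |s| = 1 := by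
      rcases le_or_gt 0 (ptC b s0 (2*K0)) with h | h
      · rw [hsdef, if_pos h, abs_one]
      · rw [hsdef, if_neg (not_le.2 h), abs_neg, abs_one]
    have hlow := ptC_lower b s0 K0 hK0 s hs
    set δ : ℝ := |ptC b s0 (2*K0)| * Real.exp (-(2*|b|)) with hδdef
    have hδpos : 0 < δ := mul_pos (abs_pos.2 (hcne K0)) (Real.exp_pos _)
    have hlow' : ∀ k, K0 ≤ k → δ ≤ s * ptC b s0 (2*k) := by
      intro k hk
      refine le_trans ?_ (hlow k hk)
      rw [hδdef]
      apply mul_le_mul_of_nonneg_left _ (abs_nonneg _)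
      apply Real.exp_le_exp.2
      have h1 : 0 ≤ 1/(2*(k:ℝ)+1) := by positivity
      nlinarith [abs_nonneg b]
    set C1 : ℝ := ∑ k ∈ Finset.range K0, |ptC b s0 (2*k)| with hC1def
    have hC1 : 0 ≤ C1 := Finset.sum_nonneg fun k _ => abs_nonneg _
    -- Pointwise lower bound for σ at large t
    have hgrow : ∀ t, 0 ≤ t → δ * Real.cosh t - δ * K0 - C1 ≤ s * σ t := by
      intro t ht
      have hy0 : 0 ≤ Real.sinh t / Real.cosh t :=
        div_nonneg (Real.sinh_nonneg_iff.2 ht) (Real.cosh_pos t).le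
      have hy1 : Real.sinh t / Real.cosh t < 1 := pt_tanh_lt_one t
      set y : ℝ := Real.sinh t / Real.cosh t with hydef
      set W : ℝ := 1 / Real.cosh t with hWdef
      have hW0 : 0 < W := by rw [hWdef]; positivity
      have hW1 : W ≤ 1 := by
        rw [hWdef, div_le_one (Real.cosh_pos t)]
        exact Real.one_le_cosh t
      have hq0 : 0 ≤ y^2 := sq_nonneg _
      have hq1 : y^2 < 1 := by nlinarith
      have hEy : ∀ n : ℕ, ptE n t = y^n * W := by
        intro n
        rw [hydef, hWdef, ptE, div_pow, pow_succ]
        field_simp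
      -- limits
      have hu : Tendsto (fun M => s * ptP b s0 M t) atTop (𝓝 (s * σ t)) :=
        (hlim t ht).const_mul s
      have hgeo : Tendsto (fun M : ℕ => ∑ k ∈ Finset.range (M+1), (y^2)^k) atTop (𝓝 ((1 - y^2)⁻¹)) := by
        have h := (hasSum_geometric_of_lt_one hq0 hq1).tendsto_sum_nat
        exact h.comp (tendsto_add_atTop_nat 1)
      have hw : Tendsto (fun M : ℕ => δ * W * (∑ k ∈ Finset.range (M+1), (y^2)^k) - δ * W * K0 - C1)
          atTop (𝓝 (δ * W * (1 - y^2)⁻¹ - δ * W * K0 - C1)) := by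
        exact ((hgeo.const_mul (δ * W)).sub tendsto_const_nhds).sub tendsto_const_nhds
      have hle : ∀ M, K0 ≤ M →
          δ * W * (∑ k ∈ Finset.range (M+1), (y^2)^k) - δ * W * K0 - C1 ≤ s * ptP b s0 M t := by
        intro M hM
        have hsplit : ∑ k ∈ Finset.range (M+1), s * (ptC b s0 (2*k) * ptE (2*k) t)
            = (∑ k ∈ Finset.range K0, s * (ptC b s0 (2*k) * ptE (2*k) t))
              + ∑ k ∈ Finset.Ico K0 (M+1), s * (ptC b s0 (2*k) * ptE (2*k) t) := by
          simp only [Finset.range_eq_Ico]; rw [Finset.sum_Ico_consecutive _ (Nat.zero_le K0) (by omega)]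
        have hP : s * ptP b s0 M t = ∑ k ∈ Finset.range (M+1), s * (ptC b s0 (2*k) * ptE (2*k) t) := by
          rw [ptP, Finset.mul_sum]
        have hlow1 : -C1 ≤ ∑ k ∈ Finset.range K0, s * (ptC b s0 (2*k) * ptE (2*k) t) := by
          have hterm1 : ∀ k ∈ Finset.range K0, -(|ptC b s0 (2*k)|) ≤ s * (ptC b s0 (2*k) * ptE (2*k) t) := by
            intro k hk
            have hE0 : 0 ≤ ptE (2*k) t := by rw [hEy]; positivity
            have hE1 : ptE (2*k) t ≤ 1 := by
              rw [hEy]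
              calc y^(2*k) * W ≤ 1 * 1 := by
                    apply mul_le_mul _ hW1 hW0.le (by norm_num)
                    exact pow_le_one₀ hy0 hy1.le
                _ = 1 := by norm_num
            have habs : |s * (ptC b s0 (2*k) * ptE (2*k) t)| ≤ |ptC b s0 (2*k)| := by
              rw [abs_mul, hsabs, one_mul, abs_mul]
              calc |ptC b s0 (2*k)| * |ptE (2*k) t| ≤ |ptC b s0 (2*k)| * 1 := by
                    apply mul_le_mul_of_nonneg_left _ (abs_nonneg _)
                    rw [abs_of_nonneg hE0]; exact hE1
                _ = _ := mul_one _
            linarith [neg_abs_le (s * (ptC b s0 (2*k) * ptE (2*k) t))]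
          calc -C1 = ∑ k ∈ Finset.range K0, -(|ptC b s0 (2*k)|) := by
                rw [hC1def, ← Finset.sum_neg_distrib]
            _ ≤ _ := Finset.sum_le_sum hterm1
        have hlow2 : δ * W * (∑ k ∈ Finset.range (M+1), (y^2)^k) - δ * W * K0
            ≤ ∑ k ∈ Finset.Ico K0 (M+1), s * (ptC b s0 (2*k) * ptE (2*k) t) := by
          have hterm : ∀ k ∈ Finset.Ico K0 (M+1), δ * W * (y^2)^k ≤ s * (ptC b s0 (2*k) * ptE (2*k) t) := by
            intro k hk
            rw [Finset.mem_Ico] at hk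
            have h1 := hlow' k hk.1
            have hE := hEy (2*k)
            have hEnn : 0 ≤ y^(2*k) * W := by positivity
            calc δ * W * (y^2)^k = δ * (y^(2*k) * W) := by rw [← pow_mul]; ring
              _ ≤ (s * ptC b s0 (2*k)) * (y^(2*k) * W) := mul_le_mul_of_nonneg_right h1 hEnn
              _ = s * (ptC b s0 (2*k) * ptE (2*k) t) := by rw [hE]; ring
          have hsum2 := Finset.sum_le_sum hterm
          have hbound : ∑ k ∈ Finset.range K0, (y^2)^k ≤ (K0:ℝ) := by
            calc ∑ k ∈ Finset.range K0, (y^2)^k ≤ ∑ k ∈ Finset.range K0, 1 :=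
                  Finset.sum_le_sum (fun k _ => pow_le_one₀ hq0 hq1.le)
              _ = K0 := by simp
          have hIco : ∑ k ∈ Finset.Ico K0 (M+1), δ * W * (y^2)^k
              = δ * W * (∑ k ∈ Finset.range (M+1), (y^2)^k) - δ * W * (∑ k ∈ Finset.range K0, (y^2)^k) := by
            rw [Finset.sum_Ico_eq_sub _ (by omega : K0 ≤ M+1)]
            rw [← Finset.mul_sum, ← Finset.mul_sum]
          have hmono : δ * W * (∑ k ∈ Finset.range K0, (y^2)^k) ≤ δ * W * K0 :=
            mul_le_mul_of_nonneg_left hbound (by positivity)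
          linarith
        rw [hP, hsplit]
        linarith
      have hfin := le_of_tendsto_of_tendsto hw hu (eventually_atTop.2 ⟨K0, hle⟩)
      have hWy : W * (1 - y^2)⁻¹ = Real.cosh t := by
        have hc := Real.cosh_pos t
        have key := Real.cosh_sq_sub_sinh_sq t
        have h1y : 1 - y^2 = 1/Real.cosh t^2 := by
          rw [hydef, div_pow]
          rw [eq_div_iff (by positivity : Real.cosh t ^ 2 ≠ 0), sub_mul, div_mul_cancel₀ _ (by positivity : Real.cosh t ^ 2 ≠ 0)]
          linarith [key]
        rw [h1y, hWdef, one_div, one_div, inv_inv]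
        rw [pow_two, ← mul_assoc, inv_mul_cancel₀ (ne_of_gt (Real.cosh_pos t)), one_mul]
      have hK0W : δ * W * (K0:ℝ) ≤ δ * (K0:ℝ) := by
        have h1 : δ * W ≤ δ * 1 := mul_le_mul_of_nonneg_left hW1 hδpos.le
        have h2 := mul_le_mul_of_nonneg_right h1 (Nat.cast_nonneg K0 : (0:ℝ) ≤ (K0:ℝ))
        simpa using h2
      have hcosheq : δ * W * (1 - y^2)⁻¹ = δ * Real.cosh t := by
        rw [mul_assoc, hWy]
      linarith
    -- choose R and contradict square-integrability
    set R : ℝ := max 0 ((2/δ) * (1 + δ*(K0:ℝ) + C1)) with hRdef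
    have hR0 : (0:ℝ) ≤ R := le_max_left _ _
    have hbig : ∀ x, R ≤ x → 1 ≤ |σ x| := by
      intro x hx
      have hx0 : 0 ≤ x := le_trans hR0 hx
      have h1 := hgrow x hx0
      have hcosh : x/2 ≤ Real.cosh x := by
        rw [Real.cosh_eq]
        have h2 := Real.add_one_le_exp x
        have h3 := Real.exp_pos (-x)
        linarith
      have hxR : (2/δ) * (1 + δ*(K0:ℝ) + C1) ≤ x := le_trans (le_max_right _ _) hx
      have h2 : 1 + δ*(K0:ℝ) + C1 ≤ δ * Real.cosh x := by
        have h4 : (2/δ) * (1 + δ*(K0:ℝ) + C1) / 2 ≤ x/2 := by linarith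
        have h5 : δ * ((2/δ) * (1 + δ*(K0:ℝ) + C1) / 2) = 1 + δ*(K0:ℝ) + C1 := by
          field_simp
        calc 1 + δ*(K0:ℝ) + C1 = δ * ((2/δ) * (1 + δ*(K0:ℝ) + C1) / 2) := h5.symm
          _ ≤ δ * (x/2) := mul_le_mul_of_nonneg_left h4 hδpos.le
          _ ≤ δ * Real.cosh x := mul_le_mul_of_nonneg_left hcosh hδpos.le
      have h6 : 1 ≤ s * σ x := by linarith
      calc (1:ℝ) ≤ s * σ x := h6
        _ ≤ |s * σ x| := le_abs_self _
        _ = |σ x| := by rw [abs_mul, hsabs, one_mul]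
    have hint : Integrable (fun x => σ x ^ 2) volume := hL2.integrable_sq
    have hm : volume {x : ℝ | 1 ≤ σ x ^ 2} < ⊤ := by
      have := hint.measure_ge_lt_top (by norm_num : (0:ℝ) < 1)
      convert this using 2
    have hsub : Set.Ici R ⊆ {x : ℝ | 1 ≤ σ x ^ 2} := by
      intro x hx
      have := hbig x hx
      simp only [Set.mem_setOf_eq]
      nlinarith [abs_nonneg (σ x), sq_abs (σ x)]
    have hmono := measure_mono (μ := volume) hsub
    rw [Real.volume_Ici] at hmono
    exact absurd (lt_of_le_of_lt hmono hm) (by simp)
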